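/- For every natural number g ≥ 2, one has 1 / (2·sin(π/(12g − 6))) < cosh(log(4g)). (Equivalently, R_g < log(4g), where R_g := arccosh(1/(2·sin(π/(12g−6)))) is Bavard's bound: half the length of the shortest geodesic loop based at any point of a closed hyperbolic surface of genus g.) -/

import Mathlib

theorem bavard_bound_lt_log (g : ℕ) (hg : 2 ≤ g) :
    1 / (2 * Real.sin (Real.pi / (12 * (g : ℝ) - 6))) < Real.cosh (Real.log (4 * (g : ℝ))) := by
  have ht : (2 : ℝ) ≤ (g : ℝ) := by exact_mod_cast hg
  set t : ℝ := (g : ℝ) with htdef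
  have hπl : (3.14 : ℝ) < Real.pi := Real.pi_gt_d2
  have hπu : Real.pi < 3.15 := Real.pi_lt_d2
  have hd : (18 : ℝ) ≤ 12 * t - 6 := by linarith
  have hdpos : (0 : ℝ) < 12 * t - 6 := by linarith
  set x : ℝ := Real.pi / (12 * t - 6) with hxdef
  have hx0 : 0 < x := div_pos Real.pi_pos hdpos
  have hx1 : x ≤ 1 := by
    rw [hxdef, div_le_one hdpos]; linarith
  have hxd : x * (12 * t - 6) = Real.pi := div_mul_cancel₀ _ (ne_of_gt hdpos)
  have hs : x - x ^ 3 / 4 < Real.sin x := by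
    have := Real.sin_gt_sub_cube hx0
    linarith [pow_pos hx0 3]
  have hcube : x ^ 3 ≤ x := by nlinarith [mul_nonneg (mul_nonneg hx0.le hx0.le) (sub_nonneg.mpr hx1), mul_nonneg hx0.le (sub_nonneg.mpr hx1)]
  have hppos : 0 < x - x ^ 3 / 4 := by nlinarith
  have hsin0 : 0 < Real.sin x := lt_trans hppos hs
  have hstep1 : 1 / (2 * Real.sin x) < 1 / (2 * (x - x ^ 3 / 4)) := by
    apply one_div_lt_one_div_of_lt (by linarith)
    linarith
  have hkey : 1 / (2 * (x - x ^ 3 / 4)) < 2 * t := by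
    rw [div_lt_iff₀ (by linarith)]
    -- need 1 < 2t * 2 * (x - x^3/4) = 4 t x - t x^3
    have hxval : x = Real.pi / (12 * t - 6) := hxdef
    have h1 : 4 * t * x = 4 * t * Real.pi / (12 * t - 6) := by
      rw [hxval]; ring
    nlinarith [sq_nonneg (12 * t - 6), sq_nonneg x, mul_pos hx0 hx0,
      mul_pos (mul_pos hx0 hx0) hx0, sq_nonneg (t - 2), sq_nonneg t,
      mul_pos hdpos hdpos]
  have hgpos : (0 : ℝ) < 4 * t := by linarith
  have hcosh : Real.cosh (Real.log (4 * t)) = (4 * t + (4 * t)⁻¹) / 2 :=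
    Real.cosh_log hgpos
  have hinv : 0 < (4 * t)⁻¹ := inv_pos.mpr hgpos
  calc 1 / (2 * Real.sin x) < 1 / (2 * (x - x ^ 3 / 4)) := hstep1
    _ < 2 * t := hkey
    _ < (4 * t + (4 * t)⁻¹) / 2 := by linarith
    _ = Real.cosh (Real.log (4 * t)) := hcosh.symm
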